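/- Let X be a Banach space admitting a decomposition X* = R ⊕ S (topological direct sum) where R is reflexive and S is separable, and suppose R is weak*-closed in X*, so that R = Y^⊥ for some closed subspace Y ⊆ X. Then S is isomorphic to the dual space Y*, hence S is a separable dual space. -/

import Mathlib

open NormedSpace Filter Topology
open scoped ENNReal

noncomputable section

/-- The annihilator of a subspace `Y ⊆ X` inside the continuous dual of `X`. -/
def annih {X : Type*} [SeminormedAddCommGroup X] [NormedSpace ℝ X] (Y : Submodule ℝ X) :
    Submodule ℝ (StrongDual ℝ X) where
  carrier := {f | ∀ y ∈ Y, f y = 0}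
  add_mem' := by
    intro a b ha hb y hy
    simp [ContinuousLinearMap.add_apply, ha y hy, hb y hy]
  zero_mem' := by intro y hy; rfl
  smul_mem' := by
    intro c f hf y hy
    simp [hf y hy]

/-- A Banach space is reflexive iff the canonical embedding into its bidual is surjective. -/
def BReflexive (X : Type*) [SeminormedAddCommGroup X] [NormedSpace ℝ X] : Prop :=
  Function.Surjective (inclusionInDoubleDual ℝ X)

/-- A Banach space is coreflexive iff `X**/J_X(X)` is reflexive. -/
def Coreflexive (X : Type*) [SeminormedAddCommGroup X] [NormedSpace ℝ X] : Prop :=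
  (fun (M : Type _) [SeminormedAddCommGroup M] [NormedSpace ℝ M] (f : X →ₗ[ℝ] M) => BReflexive (M ⧸ LinearMap.range f))
    (StrongDual ℝ (StrongDual ℝ X)) (inclusionInDoubleDual ℝ X)

/-- The adjoint of a continuous linear map between normed spaces. -/
def adj {E F : Type*} [SeminormedAddCommGroup E] [NormedSpace ℝ E]
    [SeminormedAddCommGroup F] [NormedSpace ℝ F] (f : E →L[ℝ] F) :
    StrongDual ℝ F →L[ℝ] StrongDual ℝ E :=
  (ContinuousLinearMap.compL ℝ E F ℝ).flip f

/-- `X` is weak*-sequentially dense in its bidual. -/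
def WStarSeqDense (X : Type*) [SeminormedAddCommGroup X] [NormedSpace ℝ X] : Prop :=
  ∀ F : StrongDual ℝ (StrongDual ℝ X), ∃ x : ℕ → X, ∀ f : StrongDual ℝ X,
    Tendsto (fun n => inclusionInDoubleDual ℝ X (x n) f) atTop (𝓝 (F f))

/-- `x` is a point of weak-to-norm continuity of the closed unit ball of `X`. -/
def wPC (X : Type*) [SeminormedAddCommGroup X] [NormedSpace ℝ X] (x : X) : Prop :=
  ∀ l : Filter X, (∀ᶠ y in l, ‖y‖ ≤ 1) →
    (∀ f : StrongDual ℝ X, Tendsto (fun y => f y) l (𝓝 (f x))) →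
    Tendsto id l (𝓝 x)
theorem stmt19 (X : Type*) [NormedAddCommGroup X] [NormedSpace ℝ X] [CompleteSpace X]
    (R S : Submodule ℝ (StrongDual ℝ X))
    (hRc : IsClosed (R : Set (StrongDual ℝ X))) (hSc : IsClosed (S : Set (StrongDual ℝ X)))
    (hcompl : IsCompl R S)
    (hR : BReflexive ↥R) (hS : TopologicalSpace.SeparableSpace ↥S)
    (Y : Submodule ℝ X) (hYc : IsClosed (Y : Set X)) (hRY : R = annih Y) :
    Nonempty (↥S ≃L[ℝ] StrongDual ℝ ↥Y) := by
  haveI : CompleteSpace ↥S := hSc.completeSpace_coe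
  set T : ↥S →L[ℝ] StrongDual ℝ ↥Y := (adj Y.subtypeL).comp S.subtypeL with hT
  have hTapp : ∀ (s : ↥S) (y : ↥Y), T s y = (s : StrongDual ℝ X) (y : X) := fun s y => rfl
  have hinj : LinearMap.ker (T : ↥S →ₗ[ℝ] StrongDual ℝ ↥Y) = ⊥ := by
    rw [LinearMap.ker_eq_bot']
    intro s hs
    have hsR : (s : StrongDual ℝ X) ∈ R := by
      rw [hRY]
      intro y hy
      have := congrArg (fun g => g ⟨y, hy⟩) hs
      simpa [hTapp] using this
    have : (s : StrongDual ℝ X) ∈ R ⊓ S := ⟨hsR, s.2⟩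
    rw [hcompl.inf_eq_bot] at this
    exact Subtype.ext (by simpa using this)
  have hsurj : LinearMap.range (T : ↥S →ₗ[ℝ] StrongDual ℝ ↥Y) = ⊤ := by
    rw [LinearMap.range_eq_top]
    intro g
    obtain ⟨f, hf, -⟩ := exists_extension_norm_eq Y g
    have hfmem : f ∈ R ⊔ S := by rw [hcompl.sup_eq_top]; trivial
    obtain ⟨r, hr, s, hs, hrs⟩ := Submodule.mem_sup.mp hfmem
    refine ⟨⟨s, hs⟩, ?_⟩
    ext y
    have hr0 : r (y : X) = 0 := by
      rw [hRY] at hr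
      exact hr y y.2
    have : r (y : X) + s (y : X) = g y := by
      rw [← hf y, ← hrs]; rfl
    rw [ContinuousLinearMap.coe_coe, hTapp]
    rw [hr0, zero_add] at this
    exact this
  have e := ContinuousLinearEquiv.ofBijective (σ := RingHom.id ℝ) (E := ↥S) (F := StrongDual ℝ ↥Y) T hinj hsurj
  exact ⟨e⟩
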